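/- Let n ≥ 1, α ≥ 1, β ≥ 0 be integers. Let M be the (n+1)×(n+1) matrix over ℚ with rows indexed by i ∈ {0,…,n} and columns indexed by j ∈ {0,…,n}, whose entries are: M_{i,j} = C(−α, j)·C(β+i, n−j) for 0 ≤ i ≤ n−1, and M_{n,j} = C(−1−α, j)·C(β+n+1, n−j). Then det M = 0 if and only if n·β = (n+1)·α. -/

import Mathlib

/-- The generalized binomial coefficient `C(z,k) = z(z-1)⋯(z-k+1)/k!` over `ℚ`. -/
noncomputable def genChoose (z : ℚ) (k : ℕ) : ℚ :=
  (∏ l ∈ Finset.range k, (z - (l : ℚ))) / (Nat.factorial k : ℚ)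

/-- The `(n+1) × (n+1)` matrix `M`: for `0 ≤ i ≤ n-1` the `(i,j)`-entry is
`C(-α, j)·C(β+i, n-j)`, and the last row has entries `C(-1-α, j)·C(β+n+1, n-j)`. -/
noncomputable def matM (n α β : ℕ) : Matrix (Fin (n + 1)) (Fin (n + 1)) ℚ := fun i j =>
  if (i : ℕ) < n then
    genChoose (-(α : ℚ)) (j : ℕ) * genChoose ((β : ℚ) + (i : ℕ)) (n - (j : ℕ))
  else
    genChoose (-1 - (α : ℚ)) (j : ℕ) * genChoose ((β : ℚ) + (n : ℚ) + 1) (n - (j : ℕ))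

open Finset

lemma descPochhammer_eval_eq_prod (z : ℚ) (k : ℕ) :
    (descPochhammer ℚ k).eval z = ∏ l ∈ Finset.range k, (z - (l : ℚ)) := by
  induction k with
  | zero => simp
  | succ k ih => rw [descPochhammer_succ_eval, ih, Finset.prod_range_succ]

lemma genChoose_eq_ringChoose (z : ℚ) (k : ℕ) : genChoose z k = Ring.choose z k := by
  have h := Ring.descPochhammer_eq_factorial_smul_choose (R := ℚ) z k
  have h2 : (descPochhammer ℤ k).smeval z = (descPochhammer ℚ k).eval z := by
    rw [← Polynomial.aeval_eq_smeval, Polynomial.aeval_def, ← Polynomial.eval_map,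
      descPochhammer_map]
  rw [h2, descPochhammer_eval_eq_prod, nsmul_eq_mul] at h
  have hf : (Nat.factorial k : ℚ) ≠ 0 := Nat.cast_ne_zero.mpr (Nat.factorial_ne_zero k)
  rw [genChoose, h]
  field_simp

lemma genChoose_natCast (m k : ℕ) : genChoose (m : ℚ) k = (m.choose k : ℚ) := by
  rw [genChoose_eq_ringChoose, Ring.choose_natCast]

lemma genChoose_zero_right (z : ℚ) : genChoose z 0 = 1 := by simp [genChoose]

lemma genChoose_zero_left {k : ℕ} (hk : k ≠ 0) : genChoose 0 k = 0 := by
  rw [genChoose, Finset.prod_eq_zero (Finset.mem_range.mpr (Nat.pos_of_ne_zero hk)) (by simp),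
    zero_div]

lemma genChoose_vandermonde (x y : ℚ) (K : ℕ) :
    genChoose (x + y) K = ∑ k ∈ Finset.range (K + 1), genChoose x k * genChoose y (K - k) := by
  rw [genChoose_eq_ringChoose, Ring.add_choose_eq K (Commute.all x y),
    Finset.Nat.sum_antidiagonal_eq_sum_range_succ_mk]
  exact Finset.sum_congr rfl fun k _ => by
    rw [genChoose_eq_ringChoose, genChoose_eq_ringChoose]

lemma genChoose_succ_mul (z : ℚ) (k : ℕ) :
    ((k + 1 : ℕ) : ℚ) * genChoose z (k + 1) = z * genChoose (z - 1) k := by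
  have h : ∏ l ∈ Finset.range (k + 1), (z - (l : ℚ))
      = (∏ l ∈ Finset.range k, ((z - 1) - (l : ℚ))) * z := by
    rw [Finset.prod_range_succ' (fun l => z - (l : ℚ))]
    simp only [Nat.cast_zero, sub_zero]
    congr 1
    exact Finset.prod_congr rfl fun l _ => by push_cast; ring
  have hf : (Nat.factorial k : ℚ) ≠ 0 := Nat.cast_ne_zero.mpr (Nat.factorial_ne_zero k)
  have hk1 : ((k:ℚ) + 1) ≠ 0 := by positivity
  rw [genChoose, genChoose, h, Nat.factorial_succ]
  push_cast
  field_simp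

lemma genChoose_neg_ne_zero {α : ℕ} (hα : 1 ≤ α) (j : ℕ) : genChoose (-(α : ℚ)) j ≠ 0 := by
  rw [genChoose]
  apply div_ne_zero
  · rw [Finset.prod_ne_zero_iff]
    intro l _
    have : (1:ℚ) ≤ (α:ℚ) := by exact_mod_cast hα
    have : (0:ℚ) ≤ (l:ℚ) := by positivity
    nlinarith
  · exact Nat.cast_ne_zero.mpr (Nat.factorial_ne_zero j)

lemma genChoose_neg_succ {α : ℕ} (hα : 1 ≤ α) (j : ℕ) :
    genChoose (-1 - (α : ℚ)) j = (((α : ℚ) + j) / α) * genChoose (-(α : ℚ)) j := by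
  have hαQ : (α : ℚ) ≠ 0 := by
    have : (1:ℚ) ≤ (α:ℚ) := by exact_mod_cast hα
    linarith
  have h1 : ∏ l ∈ Finset.range (j + 1), (-(α:ℚ) - (l : ℚ))
      = (∏ l ∈ Finset.range j, (-1 - (α:ℚ) - (l : ℚ))) * (-(α:ℚ)) := by
    rw [Finset.prod_range_succ' (fun l => -(α:ℚ) - (l : ℚ))]
    simp only [Nat.cast_zero, sub_zero]
    congr 1
    exact Finset.prod_congr rfl fun l _ => by push_cast; ring
  have h2 : ∏ l ∈ Finset.range (j + 1), (-(α:ℚ) - (l : ℚ))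
      = (∏ l ∈ Finset.range j, (-(α:ℚ) - (l : ℚ))) * (-(α:ℚ) - j) := by
    rw [Finset.prod_range_succ]
  have key : (∏ l ∈ Finset.range j, (-1 - (α:ℚ) - (l : ℚ))) * (-(α:ℚ))
      = (∏ l ∈ Finset.range j, (-(α:ℚ) - (l : ℚ))) * (-(α:ℚ) - j) := by rw [← h1, h2]
  have hf : (Nat.factorial j : ℚ) ≠ 0 := Nat.cast_ne_zero.mpr (Nat.factorial_ne_zero j)
  rw [genChoose, genChoose]
  rw [div_mul_div_comm]
  rw [div_eq_div_iff hf (by positivity)]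
  field_simp at key ⊢
  nlinarith [key]

noncomputable def qRow (n α β : ℕ) (k : ℕ) : ℚ :=
  (((α : ℚ) + n - k) / α) * genChoose ((β : ℚ) + n + 1) k

/-- Row lemma for the first `n` rows. -/
lemma rowA (x : ℚ) (i K N : ℕ) (hK : K ≤ N) :
    ∑ m ∈ Finset.range (N + 1),
      (i.choose m : ℚ) * (if m ≤ K then genChoose x (K - m) else 0)
      = genChoose (x + i) K := by
  rw [← Finset.sum_subset (Finset.range_subset_range.mpr (by omega) :
      Finset.range (K+1) ⊆ Finset.range (N+1))
      (fun m _ hm => by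
        rw [if_neg (by simp at hm ⊢; omega), mul_zero])]
  rw [add_comm x, genChoose_vandermonde]
  refine Finset.sum_congr rfl fun m hm => ?_
  rw [if_pos (by simp at hm; omega), genChoose_natCast]

/-- Row lemma for the last row. -/
lemma rowB (n α β K : ℕ) (hK : K ≤ n) :
    ∑ m ∈ Finset.range (n + 1),
      (∑ k ∈ Finset.range (m + 1), qRow n α β k * genChoose (-(β:ℚ)) (m - k)) *
        (if m ≤ K then genChoose (β:ℚ) (K - m) else 0)
      = qRow n α β K := by
  rw [← Finset.sum_subset (Finset.range_subset_range.mpr (by omega) :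
      Finset.range (K+1) ⊆ Finset.range (n+1))
      (fun m _ hm => by
        rw [if_neg (by simp at hm ⊢; omega), mul_zero])]
  have step1 : ∀ m ∈ Finset.range (K+1),
      (∑ k ∈ Finset.range (m + 1), qRow n α β k * genChoose (-(β:ℚ)) (m - k)) *
        (if m ≤ K then genChoose (β:ℚ) (K - m) else 0)
      = ∑ k ∈ Finset.range (m + 1),
          qRow n α β k * (genChoose (-(β:ℚ)) (m - k) * genChoose (β:ℚ) (K - m)) := by
    intro m hm
    rw [if_pos (by simp at hm; omega), Finset.sum_mul]
    exact Finset.sum_congr rfl fun k _ => by ring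
  rw [Finset.sum_congr rfl step1]
  -- swap order of summation over the triangle
  have swap : ∑ m ∈ Finset.range (K+1), ∑ k ∈ Finset.range (m + 1),
      qRow n α β k * (genChoose (-(β:ℚ)) (m - k) * genChoose (β:ℚ) (K - m))
      = ∑ k ∈ Finset.range (K+1), ∑ m ∈ Finset.Ico k (K+1),
      qRow n α β k * (genChoose (-(β:ℚ)) (m - k) * genChoose (β:ℚ) (K - m)) := by
    simp_rw [Finset.range_eq_Ico]
    rw [← Finset.sum_Ico_Ico_comm]
  rw [swap]
  have inner : ∀ k ∈ Finset.range (K+1), ∑ m ∈ Finset.Ico k (K+1),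
      qRow n α β k * (genChoose (-(β:ℚ)) (m - k) * genChoose (β:ℚ) (K - m))
      = qRow n α β k * genChoose 0 (K - k) := by
    intro k hk
    have hkK : k ≤ K := by simp at hk; omega
    rw [← Finset.mul_sum]
    congr 1
    rw [Finset.sum_Ico_eq_sum_range]
    have hlen : K + 1 - k = (K - k) + 1 := by omega
    rw [hlen]
    have : (0:ℚ) = -(β:ℚ) + β := by ring
    rw [this, genChoose_vandermonde]
    refine Finset.sum_congr rfl fun a ha => ?_
    congr 1
    · congr 1; omega
    · congr 1; omega
  rw [Finset.sum_congr rfl inner]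
  rw [Finset.sum_eq_single_of_mem K (Finset.self_mem_range_succ K)
      (fun k _ hk => by
        rw [genChoose_zero_left (by simp at *; omega), mul_zero])]
  rw [Nat.sub_self, genChoose_zero_right, mul_one]

noncomputable def matP (n α β : ℕ) : Matrix (Fin (n + 1)) (Fin (n + 1)) ℚ := fun i m =>
  if (i : ℕ) < n then ((i : ℕ).choose (m : ℕ) : ℚ)
  else ∑ k ∈ Finset.range ((m : ℕ) + 1), qRow n α β k * genChoose (-(β:ℚ)) ((m : ℕ) - k)

noncomputable def matT (n β : ℕ) : Matrix (Fin (n + 1)) (Fin (n + 1)) ℚ := fun m k =>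
  if (m : ℕ) ≤ (k : ℕ) then genChoose (β : ℚ) ((k : ℕ) - (m : ℕ)) else 0

noncomputable def matB (n β : ℕ) : Matrix (Fin (n + 1)) (Fin (n + 1)) ℚ :=
  (matT n β).submatrix id (Fin.revPerm : Equiv.Perm (Fin (n+1)))

noncomputable def matD (n α : ℕ) : Matrix (Fin (n + 1)) (Fin (n + 1)) ℚ :=
  Matrix.diagonal fun j : Fin (n + 1) => genChoose (-(α : ℚ)) (j : ℕ)

lemma rev_val {n : ℕ} (j : Fin (n+1)) : ((Fin.revPerm j : Fin (n+1)) : ℕ) = n - (j : ℕ) := by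
  simp [Fin.revPerm, Fin.val_rev]

lemma matM_factor (n α β : ℕ) (hα : 1 ≤ α) :
    matM n α β = (matP n α β * matB n β) * matD n α := by
  ext i j
  simp only [matD]
  rw [Matrix.mul_diagonal, Matrix.mul_apply]
  have hBm : ∀ m : Fin (n+1), matB n β m j
      = (if (m:ℕ) ≤ n - (j:ℕ) then genChoose (β : ℚ) ((n - (j:ℕ)) - (m:ℕ)) else 0) := by
    intro m
    simp only [matB, Matrix.submatrix_apply, id_eq, matT, rev_val]
  have hj : (j : ℕ) ≤ n := by omega
  have hK : n - (j:ℕ) ≤ n := by omega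
  by_cases hi : (i : ℕ) < n
  · simp only [matM, matP, if_pos hi]
    rw [Finset.sum_congr rfl (fun m _ => by rw [hBm m]),
      Fin.sum_univ_eq_sum_range (fun m => ((i:ℕ).choose m : ℚ) *
        (if m ≤ n - (j:ℕ) then genChoose (β : ℚ) ((n - (j:ℕ)) - m) else 0)),
      rowA (β:ℚ) (i:ℕ) (n - (j:ℕ)) n hK]
    ring
  · simp only [matM, matP, if_neg hi]
    rw [Finset.sum_congr rfl (fun m _ => by rw [hBm m]),
      Fin.sum_univ_eq_sum_range (fun m => (∑ k ∈ Finset.range (m + 1),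
          qRow n α β k * genChoose (-(β:ℚ)) (m - k)) *
        (if m ≤ n - (j:ℕ) then genChoose (β : ℚ) ((n - (j:ℕ)) - m) else 0)),
      rowB n α β (n - (j:ℕ)) hK]
    rw [qRow, genChoose_neg_succ hα]
    have hc : ((n:ℚ)) - ((n - (j:ℕ) : ℕ) : ℚ) = (j:ℕ) := by
      rw [Nat.cast_sub hj]; ring
    have : ((α:ℚ) + n - ((n - (j:ℕ) : ℕ) : ℚ)) = (α : ℚ) + (j:ℕ) := by
      rw [Nat.cast_sub hj]; ring
    rw [this]
    ring

lemma detT (n β : ℕ) : (matT n β).det = 1 := by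
  rw [Matrix.det_of_upperTriangular (M := matT n β)
      (fun i j hij => by
        simp only [matT]
        rw [if_neg (by simp at hij ⊢; omega)])]
  refine Finset.prod_eq_one fun i _ => ?_
  simp only [matT, if_pos le_rfl, Nat.sub_self, genChoose_zero_right]

lemma detB_ne_zero (n β : ℕ) : (matB n β).det ≠ 0 := by
  rw [matB, Matrix.det_permute', detT, mul_one]
  rcases Int.units_eq_one_or (Equiv.Perm.sign (Fin.revPerm : Equiv.Perm (Fin (n+1)))) with h | h <;>
    simp [h]

lemma detD_ne_zero (n α : ℕ) (hα : 1 ≤ α) : (matD n α).det ≠ 0 := by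
  rw [matD, Matrix.det_diagonal]
  exact Finset.prod_ne_zero_iff.mpr fun j _ => genChoose_neg_ne_zero hα (j : ℕ)

lemma detP (n α β : ℕ) :
    (matP n α β).det = ∑ k ∈ Finset.range (n + 1), qRow n α β k * genChoose (-(β:ℚ)) (n - k) := by
  rw [Matrix.det_succ_column (matP n α β) (Fin.last n)]
  rw [Finset.sum_eq_single_of_mem (Fin.last n) (Finset.mem_univ _)
      (fun i _ hi => by
        have hi' : (i : ℕ) < n := by
          have := i.isLt
          have : (i:ℕ) ≠ n := fun h => hi (Fin.ext (by simp [h]))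
          omega
        have : matP n α β i (Fin.last n) = 0 := by
          simp only [matP, if_pos hi', Fin.val_last]
          rw [Nat.choose_eq_zero_of_lt hi', Nat.cast_zero]
        rw [this, mul_zero, zero_mul])]
  have hlast : matP n α β (Fin.last n) (Fin.last n)
      = ∑ k ∈ Finset.range (n + 1), qRow n α β k * genChoose (-(β:ℚ)) (n - k) := by
    simp only [matP, Fin.val_last]
    rw [if_neg (lt_irrefl n)]
  have hsign : ((-1 : ℚ)) ^ ((Fin.last n : ℕ) + (Fin.last n : ℕ)) = 1 := by
    simp only [Fin.val_last, ← two_mul, pow_mul, neg_one_sq, one_pow]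
  have hminor : ((matP n α β).submatrix (Fin.last n).succAbove (Fin.last n).succAbove).det = 1 := by
    have hentry : ∀ i j : Fin n, ((matP n α β).submatrix (Fin.last n).succAbove
        (Fin.last n).succAbove) i j = ((i:ℕ).choose (j:ℕ) : ℚ) := by
      intro i j
      simp only [Matrix.submatrix_apply, Fin.succAbove_last, matP, Fin.coe_castSucc,
        if_pos i.isLt]
    rw [Matrix.det_of_lowerTriangular _ (fun i j hij => by
      rw [hentry i j]
      have : (i:ℕ) < (j:ℕ) := hij
      rw [Nat.choose_eq_zero_of_lt this, Nat.cast_zero])]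
    refine Finset.prod_eq_one fun i _ => by rw [hentry i i, Nat.choose_self, Nat.cast_one]
  rw [hlast, hsign, hminor, one_mul, mul_one]

lemma t_eval (n α β : ℕ) (hn : 1 ≤ n) (hα : 1 ≤ α) :
    ∑ k ∈ Finset.range (n + 1), qRow n α β k * genChoose (-(β:ℚ)) (n - k)
      = (((n:ℚ) + 1) * α - n * β) / α := by
  have hαQ : (α:ℚ) ≠ 0 := by positivity
  have hterm : ∀ k ∈ Finset.range (n+1), qRow n α β k * genChoose (-(β:ℚ)) (n - k)
      = genChoose ((β:ℚ)+n+1) k * genChoose (-(β:ℚ)) (n-k)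
        + (1/(α:ℚ)) * (((n-k : ℕ):ℚ) * (genChoose ((β:ℚ)+n+1) k * genChoose (-(β:ℚ)) (n-k))) := by
    intro k hk
    have hk' : k ≤ n := by simp at hk; omega
    rw [qRow]
    have h : ((α:ℚ) + n - k) = α + ((n - k : ℕ):ℚ) := by rw [Nat.cast_sub hk']; ring
    rw [h]
    field_simp
  rw [Finset.sum_congr rfl hterm, Finset.sum_add_distrib, ← Finset.mul_sum]
  have hS1 : ∑ k ∈ Finset.range (n+1),
      genChoose ((β:ℚ)+n+1) k * genChoose (-(β:ℚ)) (n-k) = (n:ℚ)+1 := by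
    rw [← genChoose_vandermonde]
    have h : (β:ℚ)+n+1 + (-(β:ℚ)) = ((n+1 : ℕ):ℚ) := by push_cast; ring
    rw [h, genChoose_natCast, Nat.choose_succ_self_right]
    push_cast; ring
  have hS2 : ∑ k ∈ Finset.range (n+1),
      ((n-k : ℕ):ℚ) * (genChoose ((β:ℚ)+n+1) k * genChoose (-(β:ℚ)) (n-k))
      = -(β:ℚ) * n := by
    obtain ⟨m, rfl⟩ : ∃ m, n = m + 1 := ⟨n - 1, by omega⟩
    rw [Finset.sum_range_succ, Nat.sub_self, Nat.cast_zero, zero_mul, add_zero]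
    have hterm2 : ∀ k ∈ Finset.range (m+1),
        (((m+1)-k : ℕ):ℚ) * (genChoose ((β:ℚ)+(m+1:ℕ)+1) k * genChoose (-(β:ℚ)) ((m+1)-k))
        = genChoose ((β:ℚ)+(m+1:ℕ)+1) k * (-(β:ℚ) * genChoose (-(β:ℚ)-1) (m-k)) := by
      intro k hk
      have hk' : k ≤ m := by simp at hk; omega
      have h1 : (m+1) - k = (m - k) + 1 := by omega
      rw [h1]
      rw [show (((m-k)+1 : ℕ):ℚ) * (genChoose ((β:ℚ)+(m+1:ℕ)+1) k * genChoose (-(β:ℚ)) ((m-k)+1))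
        = genChoose ((β:ℚ)+(m+1:ℕ)+1) k * ((((m-k)+1 : ℕ):ℚ) * genChoose (-(β:ℚ)) ((m-k)+1))
        from by ring, genChoose_succ_mul]
    rw [Finset.sum_congr rfl hterm2]
    have hpull : ∑ k ∈ Finset.range (m+1),
        genChoose ((β:ℚ)+(m+1:ℕ)+1) k * (-(β:ℚ) * genChoose (-(β:ℚ)-1) (m-k))
        = -(β:ℚ) * ∑ k ∈ Finset.range (m+1),
            genChoose ((β:ℚ)+(m+1:ℕ)+1) k * genChoose (-(β:ℚ)-1) (m-k) := by
      rw [Finset.mul_sum]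
      exact Finset.sum_congr rfl fun k _ => by ring
    rw [hpull, ← genChoose_vandermonde]
    have h : (β:ℚ)+(m+1:ℕ)+1 + (-(β:ℚ)-1) = ((m+1 : ℕ):ℚ) := by push_cast; ring
    rw [h, genChoose_natCast, Nat.choose_succ_self_right]
  rw [hS1, hS2]
  field_simp
  ring

/-- `det M = 0` iff `n·β = (n+1)·α`. -/
theorem detM_eq_zero_iff (n α β : ℕ) (hn : 1 ≤ n) (hα : 1 ≤ α) :
    (matM n α β).det = 0 ↔ n * β = (n + 1) * α := by
  have hαQ : (α:ℚ) ≠ 0 := by positivity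
  rw [matM_factor n α β hα, Matrix.det_mul, Matrix.det_mul, detP, t_eval n α β hn hα]
  rw [mul_eq_zero, mul_eq_zero]
  simp only [detB_ne_zero n β, detD_ne_zero n α hα, or_false]
  rw [div_eq_zero_iff]
  simp only [hαQ, or_false]
  rw [sub_eq_zero]
  constructor
  · intro h
    have : ((n * β : ℕ) : ℚ) = (((n+1) * α : ℕ) : ℚ) := by push_cast; linarith
    exact_mod_cast this
  · intro h
    have : ((n * β : ℕ) : ℚ) = (((n+1) * α : ℕ) : ℚ) := by exact_mod_cast h
    push_cast at this
    linarith
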